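/- There are no α_L, α_F ∈ [0,1] such that ⌊11L⌋_{α_L} = ⌊11F⌋_{α_F} and this common set is a numerical semigroup; i.e., no numerical semigroup of multiplicity 11 is simultaneously a discretization of L and of F. -/

import Mathlib

/-- The sequence `λ_i = log₂ (i + 1)`. -/
noncomputable def Lseq : ℕ → ℝ := fun i => Real.logb 2 (i + 1)

/-- The golden ratio `φ = (1 + √5) / 2`. -/
noncomputable def phi : ℝ := (1 + Real.sqrt 5) / 2

/-- Given `p ∈ (0,1)` (with `q = 1 - p`), the recursively defined division functions
`f_ℓ : {0, …, 2^ℓ - 1} → [0, 1)`: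
`f₀ 0 = 0`, `f_{ℓ+1} n = p * f_ℓ n` if `n < 2^ℓ`, and `f_{ℓ+1} n = p + q * f_ℓ (n - 2^ℓ)`
otherwise. -/
noncomputable def fcut (p : ℝ) : ℕ → ℕ → ℝ
  | 0, _ => 0
  | ℓ + 1, n => if n < 2 ^ ℓ then p * fcut p ℓ n else p + (1 - p) * fcut p ℓ (n - 2 ^ ℓ)

/-- The golden fractal mold `F`:
`φ_i = ⌊log₂ (i+1)⌋ + f_{⌊log₂ (i+1)⌋} (i + 1 - 2 ^ ⌊log₂ (i+1)⌋)` with `p = φ - 1`.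
(Here `⌊log₂ (i+1)⌋ = Nat.log 2 (i+1)`.) -/
noncomputable def Fgold : ℕ → ℝ := fun i =>
  (Nat.log 2 (i + 1) : ℝ) +
    fcut (phi - 1) (Nat.log 2 (i + 1)) (i + 1 - 2 ^ Nat.log 2 (i + 1))

/-- Rounding by `α`: `⌊r⌋_α = ⌊r⌋` if `r - ⌊r⌋ < α`, and `⌈r⌉` otherwise. -/
noncomputable def floorAlpha (r α : ℝ) : ℤ := if r - ⌊r⌋ < α then ⌊r⌋ else ⌈r⌉

/-- The discretization `⌊mM⌋_α = {⌊m μ_i⌋_α : i ∈ ℕ}` of a mold `μ`, as a set of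
natural numbers. -/
noncomputable def discr (μ : ℕ → ℝ) (m : ℕ) (α : ℝ) : Set ℕ :=
  {n : ℕ | ∃ i : ℕ, (n : ℤ) = floorAlpha ((m : ℝ) * μ i) α}

/-- A numerical semigroup: a subset of `ℕ` containing `0`, with finite complement,
closed under addition. -/
def IsNumSgp (S : Set ℕ) : Prop :=
  0 ∈ S ∧ Sᶜ.Finite ∧ ∀ a ∈ S, ∀ b ∈ S, a + b ∈ S

/- ### Auxiliary lemmas -/

lemma floorAlpha_le_ceil (r α : ℝ) : floorAlpha r α ≤ ⌈r⌉ := by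
  unfold floorAlpha; split
  · exact Int.floor_le_ceil r
  · exact le_refl _

lemma floor_le_floorAlpha (r α : ℝ) : ⌊r⌋ ≤ floorAlpha r α := by
  unfold floorAlpha; split
  · exact le_refl _
  · exact Int.floor_le_ceil r

lemma fcut_nonneg {p : ℝ} (hp0 : 0 ≤ p) (hp1 : p ≤ 1) : ∀ ℓ n, 0 ≤ fcut p ℓ n := by
  intro ℓ
  induction ℓ with
  | zero => intro n; simp [fcut]
  | succ ℓ ih =>
    intro n
    rw [fcut]
    split
    · exact mul_nonneg hp0 (ih n)
    · have := ih (n - 2 ^ ℓ)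
      nlinarith

lemma fcut_le_one {p : ℝ} (hp0 : 0 ≤ p) (hp1 : p ≤ 1) : ∀ ℓ n, fcut p ℓ n ≤ 1 := by
  intro ℓ
  induction ℓ with
  | zero => intro n; simp [fcut]
  | succ ℓ ih =>
    intro n
    rw [fcut]
    split
    · nlinarith [ih n, fcut_nonneg hp0 hp1 ℓ n]
    · nlinarith [ih (n - 2 ^ ℓ), fcut_nonneg hp0 hp1 ℓ (n - 2 ^ ℓ)]

lemma fcut_zero (p : ℝ) : ∀ ℓ, fcut p ℓ 0 = 0 := by
  intro ℓ
  induction ℓ with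
  | zero => simp [fcut]
  | succ ℓ ih => rw [fcut, if_pos (Nat.two_pow_pos ℓ), ih, mul_zero]

lemma fcut_ge_pow {p : ℝ} (hp0 : 0 ≤ p) (hp1 : p ≤ 1) :
    ∀ ℓ n, 1 ≤ n → n < 2 ^ ℓ → p ^ ℓ ≤ fcut p ℓ n := by
  intro ℓ
  induction ℓ with
  | zero => intro n h1 h2; omega
  | succ ℓ ih =>
    intro n h1 h2
    rw [fcut]
    split
    · next h =>
      calc p ^ (ℓ + 1) = p * p ^ ℓ := by ring
        _ ≤ p * fcut p ℓ n := by
            exact mul_le_mul_of_nonneg_left (ih n h1 h) hp0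
    · have h0 := fcut_nonneg hp0 hp1 ℓ (n - 2 ^ ℓ)
      have hpow : p ^ (ℓ + 1) ≤ p := by
        calc p ^ (ℓ + 1) ≤ p ^ 1 := pow_le_pow_of_le_one hp0 hp1 (by omega)
          _ = p := pow_one p
      nlinarith

lemma logb_two_pow (k : ℕ) : Real.logb 2 ((2 : ℝ) ^ k) = k := by
  rw [Real.logb_pow, Real.logb_self_eq_one (by norm_num)]; ring

lemma logb_real_lt {r : ℝ} {k : ℕ} (h0 : 0 < r) (h : r < 2 ^ k) :
    Real.logb 2 r < k := by
  calc Real.logb 2 r < Real.logb 2 ((2 : ℝ) ^ k) :=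
        Real.logb_lt_logb (by norm_num) h0 h
    _ = k := logb_two_pow k

lemma lt_logb_real {r : ℝ} {k : ℕ} (h : (2 : ℝ) ^ k < r) :
    (k : ℝ) < Real.logb 2 r := by
  calc (k : ℝ) = Real.logb 2 ((2 : ℝ) ^ k) := (logb_two_pow k).symm
    _ < Real.logb 2 r := Real.logb_lt_logb (by norm_num) (by positivity) h

/-- Key fact about `√5`. -/
lemma sqrt5_facts : Real.sqrt 5 ^ 2 = 5 ∧ 24 / 11 < Real.sqrt 5 ∧ Real.sqrt 5 < 3 := by
  have hsq : Real.sqrt 5 ^ 2 = 5 := Real.sq_sqrt (by norm_num)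
  have hnn : 0 ≤ Real.sqrt 5 := Real.sqrt_nonneg 5
  refine ⟨hsq, ?_, ?_⟩
  · nlinarith
  · nlinarith

/-- No `11 * Fgold i` gives `34` under any rounding. -/
lemma not_34_F (αF : ℝ) (i : ℕ) : (34 : ℤ) ≠ floorAlpha ((11 : ℝ) * Fgold i) αF := by
  obtain ⟨hsq, h24, h3⟩ := sqrt5_facts
  have hp0 : (0 : ℝ) ≤ phi - 1 := by unfold phi; nlinarith
  have hp1 : phi - 1 ≤ 1 := by unfold phi; nlinarith
  rcases le_or_gt i 7 with hi | hi
  · -- 11 * Fgold i ≤ 33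
    have hF : Fgold i ≤ 3 := by
      unfold Fgold
      rcases le_or_gt i 6 with hi6 | hi6
      · have hlog : Nat.log 2 (i + 1) < 3 :=
          Nat.log_lt_of_lt_pow (by omega) (by omega)
        have h1 : (Nat.log 2 (i + 1) : ℝ) ≤ 2 := by exact_mod_cast Nat.lt_succ_iff.mp hlog
        have h2 := fcut_le_one hp0 hp1 (Nat.log 2 (i + 1)) (i + 1 - 2 ^ Nat.log 2 (i + 1))
        linarith
      · have hi7 : i = 7 := by omega
        subst hi7
        have hlog : Nat.log 2 8 = 3 := Nat.log_eq_of_pow_le_of_lt_pow (by norm_num) (by norm_num)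
        rw [show (7:ℕ) + 1 = 8 from rfl, hlog]
        norm_num [fcut_zero]
    intro h
    have h1 : floorAlpha ((11 : ℝ) * Fgold i) αF ≤ 33 := by
      calc floorAlpha ((11 : ℝ) * Fgold i) αF ≤ ⌈(11 : ℝ) * Fgold i⌉ := floorAlpha_le_ceil _ _
        _ ≤ 33 := Int.ceil_le.mpr (by push_cast; linarith)
    omega
  · -- 11 * Fgold i ≥ 35
    have hF : (35 : ℝ) ≤ 11 * Fgold i := by
      rcases le_or_gt i 14 with hi14 | hi14
      · have hlog : Nat.log 2 (i + 1) = 3 :=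
          Nat.log_eq_of_pow_le_of_lt_pow (by omega) (by omega)
        have hcut : (phi - 1) ^ 3 ≤ fcut (phi - 1) 3 (i + 1 - 2 ^ 3) :=
          fcut_ge_pow hp0 hp1 3 (i + 1 - 2 ^ 3) (by omega) (by omega)
        have hcube : (phi - 1) ^ 3 = Real.sqrt 5 - 2 := by
          unfold phi
          have : ((1 + Real.sqrt 5) / 2 - 1) ^ 3 = ((Real.sqrt 5 - 1)) ^ 3 / 8 := by ring
          rw [this]
          linear_combination ((Real.sqrt 5 - 3) / 8) * hsq
        unfold Fgold
        rw [hlog]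
        have hsame : i + 1 - 2 ^ 3 = i - 7 := by omega
        rw [hcube, hsame] at hcut
        push_cast
        nlinarith
      · have hlog : 4 ≤ Nat.log 2 (i + 1) :=
          (Nat.le_log_iff_pow_le (by norm_num) (by omega)).mpr (by omega)
        have h1 : (4 : ℝ) ≤ (Nat.log 2 (i + 1) : ℝ) := by exact_mod_cast hlog
        have h2 := fcut_nonneg hp0 hp1 (Nat.log 2 (i + 1)) (i + 1 - 2 ^ Nat.log 2 (i + 1))
        unfold Fgold
        nlinarith
    intro h
    have h1 : (35 : ℤ) ≤ floorAlpha ((11 : ℝ) * Fgold i) αF := by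
      calc (35 : ℤ) ≤ ⌊(11 : ℝ) * Fgold i⌋ := Int.le_floor.mpr (by push_cast; linarith)
        _ ≤ floorAlpha ((11 : ℝ) * Fgold i) αF := floor_le_floorAlpha _ _
    omega

theorem no_simultaneous_discretization_eleven :
    ¬ ∃ αL αF : ℝ, αL ∈ Set.Icc (0 : ℝ) 1 ∧ αF ∈ Set.Icc (0 : ℝ) 1 ∧
      discr Lseq 11 αL = discr Fgold 11 αF ∧ IsNumSgp (discr Lseq 11 αL) := by
  rintro ⟨αL, αF, hαL, hαF, hEq, h0, hfin, hadd⟩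
  -- The key value x = 11 * log₂ 3 ∈ (17, 18)
  set x : ℝ := (11 : ℝ) * Lseq 2 with hxdef
  have hx3 : x = Real.logb 2 (177147 : ℝ) := by
    rw [hxdef]
    unfold Lseq
    rw [show (177147 : ℝ) = 3 ^ 11 by norm_num, Real.logb_pow]
    norm_num
  have hx17 : (17 : ℝ) < x := by
    rw [hx3]
    exact_mod_cast lt_logb_real (k := 17) (by norm_num)
  have hx18 : x < 18 := by
    rw [hx3]
    exact_mod_cast logb_real_lt (k := 18) (by norm_num) (by norm_num)
  have hfloorx : ⌊x⌋ = 17 := Int.floor_eq_iff.mpr ⟨by push_cast; linarith, by push_cast; linarith⟩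
  have hceilx : ⌈x⌉ = 18 := Int.ceil_eq_iff.mpr ⟨by push_cast; linarith, by push_cast; linarith⟩
  have hcast : ((11 : ℕ) : ℝ) = 11 := by norm_num
  by_cases hc : x - (17 : ℤ) < αL
  · -- Case A : 17 ∈ S, hence 34 ∈ S = discr Fgold, contradiction
    have h17 : (17 : ℕ) ∈ discr Lseq 11 αL := by
      refine ⟨2, ?_⟩
      rw [hcast, ← hxdef]
      unfold floorAlpha
      rw [hfloorx, if_pos (by exact_mod_cast hc)]
      norm_num
    have h34 : (34 : ℕ) ∈ discr Lseq 11 αL := hadd 17 h17 17 h17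
    rw [hEq] at h34
    obtain ⟨i, hi⟩ := h34
    rw [hcast] at hi
    exact not_34_F αF i (by exact_mod_cast hi)
  · -- Case B : 18 ∈ S, hence 36 ∈ S = discr Lseq, contradiction
    push_neg at hc
    have hαLle : αL ≤ x - 17 := by push_cast at hc; linarith
    have h18 : (18 : ℕ) ∈ discr Lseq 11 αL := by
      refine ⟨2, ?_⟩
      rw [hcast, ← hxdef]
      unfold floorAlpha
      rw [hfloorx, if_neg (by push_cast; linarith), hceilx]
      norm_num
    have h36 : (36 : ℕ) ∈ discr Lseq 11 αL := hadd 18 h18 18 h18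
    obtain ⟨i, hi⟩ := h36
    rw [hcast] at hi
    have hi36 : (36 : ℤ) = floorAlpha ((11 : ℝ) * Lseq i) αL := by exact_mod_cast hi
    clear hi
    rcases le_or_gt i 8 with hi8 | hi8
    · -- 11 * Lseq i ≤ 11 * log₂ 9 < 35
      have hmono : Lseq i ≤ Real.logb 2 9 := by
        unfold Lseq
        apply (Real.logb_le_logb (by norm_num) (by positivity) (by norm_num)).mpr
        have : (i : ℝ) ≤ 8 := by exact_mod_cast hi8
        linarith
      have h9 : (11 : ℝ) * Real.logb 2 9 < 35 := by
        have h' : (11 : ℝ) * Real.logb 2 9 = Real.logb 2 ((9 : ℝ) ^ 11) := by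
          rw [Real.logb_pow]; norm_num
        rw [h']
        exact_mod_cast logb_real_lt (k := 35) (by norm_num) (by norm_num)
      have hlt : (11 : ℝ) * Lseq i < 35 := by nlinarith
      have h1 : floorAlpha ((11 : ℝ) * Lseq i) αL ≤ 35 := by
        calc floorAlpha ((11 : ℝ) * Lseq i) αL ≤ ⌈(11 : ℝ) * Lseq i⌉ := floorAlpha_le_ceil _ _
          _ ≤ 35 := Int.ceil_le.mpr (by push_cast; linarith)
      omega
    rcases le_or_gt i 9 with hi9 | hi9
    · -- i = 9 : y = 11 * log₂ 10 ∈ (36, 37), and frac y > x - 17 ≥ αL, so rounds up to 37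
      have hi9' : i = 9 := by omega
      subst hi9'
      set y : ℝ := (11 : ℝ) * Lseq 9 with hydef
      have hy : y = Real.logb 2 ((10 : ℝ) ^ 11) := by
        rw [hydef]; unfold Lseq; rw [Real.logb_pow]; norm_num
      have hy36 : (36 : ℝ) < y := by
        rw [hy]; exact_mod_cast lt_logb_real (k := 36) (by norm_num)
      have hy37 : y < 37 := by
        rw [hy]; exact_mod_cast logb_real_lt (k := 37) (by norm_num) (by norm_num)
      have hkey : x + 19 < y := by
        have h19 : Real.logb 2 (177147 : ℝ) + 19 = Real.logb 2 ((177147 : ℝ) * 2 ^ 19) := by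
          rw [Real.logb_mul (by norm_num) (by positivity), logb_two_pow]
          norm_num
        rw [hx3, hy, h19]
        apply Real.logb_lt_logb (by norm_num) (by positivity)
        norm_num
      have hfloory : ⌊y⌋ = 36 :=
        Int.floor_eq_iff.mpr ⟨by push_cast; linarith, by push_cast; linarith⟩
      have hceily : ⌈y⌉ = 37 :=
        Int.ceil_eq_iff.mpr ⟨by push_cast; linarith, by push_cast; linarith⟩
      unfold floorAlpha at hi36
      rw [hfloory, if_neg (by push_cast; linarith), hceily] at hi36
      omega
    · -- i ≥ 10 : 11 * Lseq i ≥ 11 * log₂ 11 > 37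
      have hmono : Real.logb 2 11 ≤ Lseq i := by
        unfold Lseq
        apply (Real.logb_le_logb (by norm_num) (by norm_num) (by positivity)).mpr
        have : (10 : ℝ) ≤ (i : ℝ) := by exact_mod_cast hi9
        linarith
      have h11 : (37 : ℝ) < 11 * Real.logb 2 11 := by
        have h' : (11 : ℝ) * Real.logb 2 11 = Real.logb 2 ((11 : ℝ) ^ 11) := by
          rw [Real.logb_pow]; norm_num
        rw [h']
        exact_mod_cast lt_logb_real (k := 37) (by norm_num)
      have hgt : (37 : ℝ) < 11 * Lseq i := by nlinarith
      have h1 : (37 : ℤ) ≤ floorAlpha ((11 : ℝ) * Lseq i) αL := by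
        calc (37 : ℤ) ≤ ⌊(11 : ℝ) * Lseq i⌋ := Int.le_floor.mpr (by push_cast; linarith)
          _ ≤ floorAlpha ((11 : ℝ) * Lseq i) αL := floor_le_floorAlpha _ _
      omega
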